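/- A natural number n satisfies ∑_{d ∣ n} d·φ(d)·φ(n/d) = 12 · ∑_{d ∣ n} φ(d)·φ(n/d) if and only if n ∈ {23, 32, 33, 35, 40, 42}. -/

import Mathlib

set_option maxRecDepth 10000

theorem stmt_2 (n : ℕ) (hn : 0 < n) :
    (∑ d ∈ n.divisors, d * Nat.totient d * Nat.totient (n / d) =
      12 * ∑ d ∈ n.divisors, Nat.totient d * Nat.totient (n / d)) ↔
    n ∈ ({23, 32, 33, 35, 40, 42} : Finset ℕ) := by
  rcases le_or_gt n 144 with h | h
  · interval_cases n <;> decide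
  · have hnot : n ∉ ({23, 32, 33, 35, 40, 42} : Finset ℕ) := by
      simp only [Finset.mem_insert, Finset.mem_singleton]; omega
    simp only [hnot, iff_false]
    intro heq
    -- S := right sum, L := left sum
    set S := ∑ d ∈ n.divisors, Nat.totient d * Nat.totient (n / d) with hS
    have hS1 : 1 ≤ S := by
      have h1 : (1:ℕ) ∈ n.divisors := Nat.one_mem_divisors.2 hn.ne'
      calc 1 ≤ Nat.totient 1 * Nat.totient (n / 1) := by
              simp only [Nat.totient_one, Nat.div_one, one_mul]
              exact Nat.totient_pos.2 hn
        _ ≤ S := Finset.single_le_sum (f := fun d => Nat.totient d * Nat.totient (n / d))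
              (fun _ _ => Nat.zero_le _) h1
    have key : 25 * S ≤ 2 * (∑ d ∈ n.divisors, d * Nat.totient d * Nat.totient (n / d)) := by
      have hrev : ∑ d ∈ n.divisors, (n / d) * Nat.totient (n / d) * Nat.totient d
          = ∑ d ∈ n.divisors, d * Nat.totient d * Nat.totient (n / d) := by
        have := Nat.sum_div_divisors n (fun d => d * Nat.totient d * Nat.totient (n / d))
        rw [← this]
        refine Finset.sum_congr rfl fun d hd => ?_
        rw [Nat.div_div_self (Nat.mem_divisors.1 hd).1 hn.ne']
      calc 25 * S = ∑ d ∈ n.divisors, 25 * (Nat.totient d * Nat.totient (n / d)) := by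
            rw [Finset.mul_sum]
        _ ≤ ∑ d ∈ n.divisors, (d + n / d) * (Nat.totient d * Nat.totient (n / d)) := by
            refine Finset.sum_le_sum fun d hd => ?_
            have hd' := Nat.mem_divisors.1 hd
            have hmul : d * (n / d) = n := Nat.mul_div_cancel' hd'.1
            have h25 : 25 ≤ d + n / d := by
              by_contra hc
              push_neg at hc
              have hc' : (d:ℤ) + ((n/d : ℕ):ℤ) ≤ 24 := by exact_mod_cast Nat.lt_succ_iff.mp hc
              have hz : (d:ℤ) * ((n/d : ℕ):ℤ) ≤ 144 := by
                nlinarith [sq_nonneg ((d:ℤ) - ((n/d:ℕ):ℤ))]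
              have hnn : d * (n/d) ≤ 144 := by exact_mod_cast hz
              omega
            exact Nat.mul_le_mul_right _ h25
        _ = (∑ d ∈ n.divisors, d * Nat.totient d * Nat.totient (n / d)) +
            ∑ d ∈ n.divisors, (n / d) * Nat.totient (n / d) * Nat.totient d := by
            rw [← Finset.sum_add_distrib]
            refine Finset.sum_congr rfl fun d hd => ?_
            ring
        _ = 2 * (∑ d ∈ n.divisors, d * Nat.totient d * Nat.totient (n / d)) := by
            rw [hrev]; ring
    rw [heq] at key
    omega
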